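/- Entrywise comparison of the exactly scaled and approximately scaled matrices: for all i ≠ j, ((1 − δ)/(1 + ε)) · v̂_i A_{i,j} v̂_j ≤ v_i A_{i,j} v_j and (1 − δ)(1 − ε) · v_i A_{i,j} v_j ≤ v̂_i A_{i,j} v̂_j, where δ = min{ 1 , 4ε / ((n − 2) · min_{i ≠ j} v̂_i A_{i,j} v̂_j) }. -/

import Mathlib

open Finset

set_option maxHeartbeats 1000000 in
/-- Entrywise comparison of the exactly scaled and approximately scaled
matrices: for all `i ≠ j`,
`((1 − δ)/(1 + ε)) · v̂_i A_{i,j} v̂_j ≤ v_i A_{i,j} v_j` and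
`(1 − δ)(1 − ε) · v_i A_{i,j} v_j ≤ v̂_i A_{i,j} v̂_j`, where
`δ = min { 1 , 4ε / ((n − 2) · min_{i ≠ j} v̂_i A_{i,j} v̂_j) }`. -/
theorem entrywise_scaled_matrix_comparison
    {n : ℕ} (hn : 3 ≤ n)
    (A : Fin n → Fin n → ℝ)
    (hA_symm : ∀ i j, A i j = A j i)
    (hA_nonneg : ∀ i j, 0 ≤ A i j)
    (hA_diag : ∀ i, A i i = 0)
    (hA_offdiag : ∀ i j, i ≠ j → 0 < A i j)
    (v : Fin n → ℝ) (hv : ∀ i, 0 < v i)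
    (hds : ∀ i, ∑ j, v i * A i j * v j = 1)
    (ε : ℝ) (hε0 : 0 < ε) (hε1 : ε < 1)
    (vh : Fin n → ℝ) (hvh : ∀ i, 0 < vh i)
    (happrox : ∀ i, |∑ j, vh i * A i j * vh j - 1| ≤ ε)
    (δ : ℝ)
    (hδ : δ = min 1 (4 * ε / (((n : ℝ) - 2) *
      Finset.inf' (Finset.univ.filter (fun p : Fin n × Fin n => p.1 ≠ p.2))
        ⟨(⟨0, by omega⟩, ⟨1, by omega⟩), by
          simp only [Finset.mem_filter, Finset.mem_univ, true_and]
          exact Fin.ne_of_val_ne (by simp)⟩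
        (fun p => vh p.1 * A p.1 p.2 * vh p.2)))) :
    ∀ i j, i ≠ j →
      ((1 - δ) / (1 + ε)) * (vh i * A i j * vh j) ≤ v i * A i j * v j ∧
      (1 - δ) * (1 - ε) * (v i * A i j * v j) ≤ vh i * A i j * vh j := by
  set m := Finset.inf' (Finset.univ.filter (fun p : Fin n × Fin n => p.1 ≠ p.2))
        ⟨(⟨0, by omega⟩, ⟨1, by omega⟩), by
          simp only [Finset.mem_filter, Finset.mem_univ, true_and]
          exact Fin.ne_of_val_ne (by simp)⟩
        (fun p => vh p.1 * A p.1 p.2 * vh p.2) with hm_def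
  -- basic facts about m
  have hm_le : ∀ i j, i ≠ j → m ≤ vh i * A i j * vh j := by
    intro i j hij
    apply Finset.inf'_le (fun p : Fin n × Fin n => vh p.1 * A p.1 p.2 * vh p.2)
      (b := (i, j))
    simp [hij]
  have hm_pos : 0 < m := by
    obtain ⟨p, hp, hpe⟩ := Finset.exists_mem_eq_inf'
      (s := Finset.univ.filter (fun p : Fin n × Fin n => p.1 ≠ p.2))
      ⟨(⟨0, by omega⟩, ⟨1, by omega⟩), by
          simp only [Finset.mem_filter, Finset.mem_univ, true_and]
          exact Fin.ne_of_val_ne (by simp)⟩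
      (fun p => vh p.1 * A p.1 p.2 * vh p.2)
    rw [hm_def, hpe]
    simp only [Finset.mem_filter, Finset.mem_univ, true_and] at hp
    exact mul_pos (mul_pos (hvh _) (hA_offdiag _ _ hp)) (hvh _)
  clear_value m
  have hvh_ne : ∀ i, vh i ≠ 0 := fun i => (hvh i).ne'
  set u : Fin n → ℝ := fun i => v i / vh i with hu_def
  have hu_pos : ∀ i, 0 < u i := fun i => div_pos (hv i) (hvh i)
  have hv_eq : ∀ i, v i = u i * vh i := fun i => (div_mul_cancel₀ _ (hvh_ne i)).symm
  have hrel : ∀ i j, v i * A i j * v j = u i * u j * (vh i * A i j * vh j) := by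
    intro i j
    rw [hv_eq i, hv_eq j]; ring
  clear_value u
  have hB_nonneg : ∀ i j, 0 ≤ vh i * A i j * vh j := fun i j =>
    mul_nonneg (mul_nonneg (hvh i).le (hA_nonneg i j)) (hvh j).le
  have hBdiag : ∀ i, vh i * A i i * vh i = 0 := fun i => by rw [hA_diag i]; ring
  -- row sums of approximate matrix
  have hr_lo : ∀ i, 1 - ε ≤ ∑ j, vh i * A i j * vh j := by
    intro i; have := abs_le.mp (happrox i); linarith [this.2, this.1]
  have hr_hi : ∀ i, ∑ j, vh i * A i j * vh j ≤ 1 + ε := by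
    intro i; have := abs_le.mp (happrox i); linarith [this.2]
  -- row identity
  have hrow : ∀ i, ∑ j, u j * (vh i * A i j * vh j) = 1 / u i := by
    intro i
    have h1 : u i * ∑ j, u j * (vh i * A i j * vh j) = 1 := by
      rw [Finset.mul_sum]
      rw [← hds i]
      exact Finset.sum_congr rfl fun j _ => by rw [hrel i j]; ring
    rw [eq_div_iff (hu_pos i).ne']
    linear_combination h1
  -- max and min of u
  obtain ⟨iM, -, hiM⟩ := Finset.exists_max_image Finset.univ u ⟨⟨0, by omega⟩, Finset.mem_univ _⟩
  obtain ⟨im, -, him⟩ := Finset.exists_min_image Finset.univ u ⟨⟨0, by omega⟩, Finset.mem_univ _⟩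
  set M := u iM with hM_def
  set μ := u im with hμ_def
  clear_value M μ
  have hμ_pos : 0 < μ := by rw [hμ_def]; exact hu_pos im
  have hM_pos : 0 < M := by rw [hM_def]; exact hu_pos iM
  have hrowM : ∑ j, u j * (vh iM * A iM j * vh j) = 1 / M := by rw [hM_def]; exact hrow iM
  have hrowμ : ∑ j, u j * (vh im * A im j * vh j) = 1 / μ := by rw [hμ_def]; exact hrow im
  have hμM : μ ≤ M := by rw [hM_def]; exact him iM (Finset.mem_univ _)
  -- F1 : 1 ≤ μ * M * (1 + ε)
  have hF1 : 1 ≤ μ * M * (1 + ε) := by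
    have h1 : ∑ j, u j * (vh im * A im j * vh j) ≤ M * ∑ j, vh im * A im j * vh j := by
      rw [Finset.mul_sum]
      exact Finset.sum_le_sum fun j _ =>
        mul_le_mul_of_nonneg_right (hiM j (Finset.mem_univ j)) (hB_nonneg im j)
    rw [hrowμ] at h1
    have h2 : M * ∑ j, vh im * A im j * vh j ≤ M * (1 + ε) :=
      mul_le_mul_of_nonneg_left (hr_hi im) hM_pos.le
    have h3 : 1 / μ ≤ M * (1 + ε) := le_trans h1 h2
    rw [div_le_iff₀ hμ_pos] at h3
    nlinarith
  -- F2 : μ * M * (1 - ε) ≤ 1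
  have hF2 : μ * M * (1 - ε) ≤ 1 := by
    have h1 : μ * ∑ j, vh iM * A iM j * vh j ≤ ∑ j, u j * (vh iM * A iM j * vh j) := by
      rw [Finset.mul_sum]
      exact Finset.sum_le_sum fun j _ =>
        mul_le_mul_of_nonneg_right (him j (Finset.mem_univ j)) (hB_nonneg iM j)
    rw [hrowM] at h1
    have h2 : μ * (1 - ε) ≤ μ * ∑ j, vh iM * A iM j * vh j :=
      mul_le_mul_of_nonneg_left (hr_lo iM) hμ_pos.le
    have h3 : μ * (1 - ε) ≤ 1 / M := le_trans h2 h1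
    rw [le_div_iff₀ hM_pos] at h3
    nlinarith
  -- splitting lemma: for any i, ∑ u_j B_ij = c * (row sum) + ∑_{j ≠ i} (u_j - c) B_ij
  have hsplit : ∀ (i : Fin n) (c : ℝ),
      ∑ j, u j * (vh i * A i j * vh j)
        = c * (∑ j, vh i * A i j * vh j)
          + ∑ j ∈ Finset.univ.erase i, (u j - c) * (vh i * A i j * vh j) := by
    intro i c
    have e1 : ∑ j, (u j - c) * (vh i * A i j * vh j)
        = ∑ j ∈ Finset.univ.erase i, (u j - c) * (vh i * A i j * vh j) := by
      rw [← Finset.add_sum_erase Finset.univ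
        (fun j => (u j - c) * (vh i * A i j * vh j)) (Finset.mem_univ i)]
      rw [hBdiag i, mul_zero, zero_add]
    rw [← e1, Finset.mul_sum, ← Finset.sum_add_distrib]
    exact Finset.sum_congr rfl fun j _ => by ring
  -- T1 bound from row iM
  have hT1 : m * (∑ j ∈ Finset.univ.erase iM, (u j - μ)) ≤ 1 / M - μ * (1 - ε) := by
    have h1 := hsplit iM μ
    rw [hrowM] at h1
    have h2 : ∑ j ∈ Finset.univ.erase iM, (u j - μ) * m
        ≤ ∑ j ∈ Finset.univ.erase iM, (u j - μ) * (vh iM * A iM j * vh j) := by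
      apply Finset.sum_le_sum
      intro j hj
      have hne : j ≠ iM := Finset.ne_of_mem_erase hj
      exact mul_le_mul_of_nonneg_left (hm_le iM j (Ne.symm hne))
        (by linarith [him j (Finset.mem_univ j)])
    rw [← Finset.sum_mul] at h2
    have h3 : μ * (1 - ε) ≤ μ * (∑ j, vh iM * A iM j * vh j) :=
      mul_le_mul_of_nonneg_left (hr_lo iM) hμ_pos.le
    nlinarith [h2, h3, h1]
  -- T2 bound from row im
  have hT2 : m * (∑ j ∈ Finset.univ.erase im, (M - u j)) ≤ M * (1 + ε) - 1 / μ := by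
    have h1 := hsplit im M
    rw [hrowμ] at h1
    have h2 : ∑ j ∈ Finset.univ.erase im, (u j - M) * (vh im * A im j * vh j)
        ≤ ∑ j ∈ Finset.univ.erase im, (u j - M) * m := by
      apply Finset.sum_le_sum
      intro j hj
      have hne : j ≠ im := Finset.ne_of_mem_erase hj
      rw [show (u j - M) * m = -((M - u j) * m) by ring,
        show (u j - M) * (vh im * A im j * vh j) = -((M - u j) * (vh im * A im j * vh j)) by ring]
      apply neg_le_neg
      exact mul_le_mul_of_nonneg_left (hm_le im j (Ne.symm hne))
        (by linarith [hiM j (Finset.mem_univ j)])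
    rw [← Finset.sum_mul] at h2
    have h3 : M * (∑ j, vh im * A im j * vh j) ≤ M * (1 + ε) :=
      mul_le_mul_of_nonneg_left (hr_hi im) hM_pos.le
    have h4 : ∑ j ∈ Finset.univ.erase im, (u j - M) = -(∑ j ∈ Finset.univ.erase im, (M - u j)) := by
      rw [← Finset.sum_neg_distrib]
      exact Finset.sum_congr rfl fun j _ => by ring
    nlinarith [h2, h3, h1, h4]
  -- T1 + T2 ≥ (n-2)(M-μ)
  have hT12 : ((n : ℝ) - 2) * (M - μ)
      ≤ (∑ j ∈ Finset.univ.erase iM, (u j - μ)) + (∑ j ∈ Finset.univ.erase im, (M - u j)) := by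
    by_cases hMm : iM = im
    · have hMμ0 : M = μ := by rw [hM_def, hμ_def, hMm]
      have h1 : 0 ≤ ∑ j ∈ Finset.univ.erase iM, (u j - μ) :=
        Finset.sum_nonneg fun j _ => by linarith [him j (Finset.mem_univ j)]
      have h2 : 0 ≤ ∑ j ∈ Finset.univ.erase im, (M - u j) :=
        Finset.sum_nonneg fun j _ => by linarith [hiM j (Finset.mem_univ j)]
      rw [hMμ0]; simp; linarith
    · set s : Finset (Fin n) := (Finset.univ.erase iM).erase im with hs_def
      have hs1 : s ⊆ Finset.univ.erase iM := Finset.erase_subset _ _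
      have hs2 : s ⊆ Finset.univ.erase im := by
        rw [hs_def, Finset.erase_right_comm]
        exact Finset.erase_subset _ _
      have hcard : s.card = n - 2 := by
        rw [hs_def, Finset.card_erase_of_mem, Finset.card_erase_of_mem (Finset.mem_univ iM)]
        · simp only [Finset.card_univ, Fintype.card_fin]; omega
        · exact Finset.mem_erase.mpr ⟨Ne.symm hMm, Finset.mem_univ im⟩
      have h1 : ∑ j ∈ s, (u j - μ) ≤ ∑ j ∈ Finset.univ.erase iM, (u j - μ) :=
        Finset.sum_le_sum_of_subset_of_nonneg hs1
          (fun j _ _ => by linarith [him j (Finset.mem_univ j)])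
      have h2 : ∑ j ∈ s, (M - u j) ≤ ∑ j ∈ Finset.univ.erase im, (M - u j) :=
        Finset.sum_le_sum_of_subset_of_nonneg hs2
          (fun j _ _ => by linarith [hiM j (Finset.mem_univ j)])
      have h3 : (∑ j ∈ s, (u j - μ)) + (∑ j ∈ s, (M - u j)) = s.card * (M - μ) := by
        rw [← Finset.sum_add_distrib]
        rw [Finset.sum_congr rfl (fun j _ => show (u j - μ) + (M - u j) = (M - μ) by ring)]
        rw [Finset.sum_const, nsmul_eq_mul]
      have hcard' : (s.card : ℝ) = (n : ℝ) - 2 := by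
        rw [hcard]; push_cast [Nat.cast_sub (by omega : 2 ≤ n)]; ring
      rw [← hcard', ← h3]
      linarith
  -- key: (n-2) m (M-μ) ≤ 2 ε M
  have hkey0 : ((n : ℝ) - 2) * m * (M - μ) ≤ 2 * ε * M := by
    have hsum : m * (((∑ j ∈ Finset.univ.erase iM, (u j - μ))
        + (∑ j ∈ Finset.univ.erase im, (M - u j))))
        ≤ (1 / M - μ * (1 - ε)) + (M * (1 + ε) - 1 / μ) := by
      rw [mul_add]; linarith [hT1, hT2]
    have hmono : ((n : ℝ) - 2) * m * (M - μ)
        ≤ m * (((∑ j ∈ Finset.univ.erase iM, (u j - μ))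
        + (∑ j ∈ Finset.univ.erase im, (M - u j)))) := by
      rw [show ((n : ℝ) - 2) * m * (M - μ) = m * (((n : ℝ) - 2) * (M - μ)) by ring]
      exact mul_le_mul_of_nonneg_left hT12 hm_pos.le
    -- now bound RHS: 1/M - 1/μ + M(1+ε) - μ(1-ε) ≤ 2 ε M
    have hinvM : M * (1 / M) = 1 := mul_one_div_cancel hM_pos.ne'
    have hinvμ : μ * (1 / μ) = 1 := mul_one_div_cancel hμ_pos.ne'
    have hRHS : (1 / M - μ * (1 - ε)) + (M * (1 + ε) - 1 / μ) ≤ 2 * ε * M := by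
      have hD : 0 ≤ M - μ := by linarith
      -- 1/M - 1/μ = -(M-μ)/(Mμ); and (M-μ)(1 - 1/(Mμ)) ≤ ε(M-μ)
      have h5 : 1 / M - 1 / μ = -(M - μ) / (M * μ) := by
        field_simp
        ring
      have h6 : (M - μ) * (1 - ε) ≤ (M - μ) / (M * μ) := by
        rw [le_div_iff₀ (mul_pos hM_pos hμ_pos)]
        nlinarith [hF2, hD]
      rw [show (1 / M - μ * (1 - ε)) + (M * (1 + ε) - 1 / μ)
          = (1 / M - 1 / μ) + (M - μ) + ε * (M + μ) by ring, h5,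
        show -(M - μ) / (M * μ) = -((M - μ) / (M * μ)) by ring]
      linarith [h6]
    linarith
  -- hence (1 - δ) M ≤ μ
  have ht_pos : 0 < 4 * ε / (((n : ℝ) - 2) * m) := by
    apply div_pos (by linarith)
    apply mul_pos _ hm_pos
    have : (3 : ℝ) ≤ (n : ℝ) := by exact_mod_cast hn
    linarith
  have hδ_pos : 0 < δ := by rw [hδ]; exact lt_min one_pos ht_pos
  have hδ_le1 : δ ≤ 1 := by rw [hδ]; exact min_le_left _ _
  have hn2_pos : 0 < ((n : ℝ) - 2) * m := by
    apply mul_pos _ hm_pos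
    have : (3 : ℝ) ≤ (n : ℝ) := by exact_mod_cast hn
    linarith
  have hkey : (1 - δ) * M ≤ μ := by
    have hcase : M - μ ≤ δ * M := by
      rw [hδ]
      rcases min_cases (1 : ℝ) (4 * ε / (((n : ℝ) - 2) * m)) with ⟨h, -⟩ | ⟨h, -⟩
      · rw [h]; linarith
      · rw [h]
        have h2 : (M - μ) * (((n : ℝ) - 2) * m)
            ≤ (4 * ε / (((n : ℝ) - 2) * m) * M) * (((n : ℝ) - 2) * m) := by
          have : (4 * ε / (((n : ℝ) - 2) * m) * M) * (((n : ℝ) - 2) * m) = 4 * ε * M := by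
            field_simp
            exact div_self (ne_of_gt (by have : (3 : ℝ) ≤ (n : ℝ) := by exact_mod_cast hn
                                         linarith))
          rw [this]
          nlinarith [hkey0]
        exact le_of_mul_le_mul_right h2 hn2_pos
    linarith
  -- finish
  intro i j hij
  have hB_pos : 0 < vh i * A i j * vh j :=
    mul_pos (mul_pos (hvh i) (hA_offdiag i j hij)) (hvh j)
  have hui_lo : μ ≤ u i := him i (Finset.mem_univ i)
  have huj_lo : μ ≤ u j := him j (Finset.mem_univ j)
  have hui_hi : u i ≤ M := hiM i (Finset.mem_univ i)
  have huj_hi : u j ≤ M := hiM j (Finset.mem_univ j)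
  have hδ1 : (0:ℝ) ≤ 1 - δ := by linarith
  have scalar1 : (1 - δ) / (1 + ε) ≤ u i * u j := by
    rw [div_le_iff₀ (by linarith : (0:ℝ) < 1 + ε)]
    have a1 : (1 - δ) * M * μ ≤ μ * μ := by
      have := mul_le_mul_of_nonneg_right hkey hμ_pos.le
      linarith [this]
    have a2 : μ * μ ≤ u i * u j := mul_le_mul hui_lo huj_lo hμ_pos.le (hu_pos i).le
    have a3 : (1 - δ) * 1 ≤ (1 - δ) * (μ * M * (1 + ε)) := mul_le_mul_of_nonneg_left hF1 hδ1
    have a4 : (1 - δ) * (μ * M * (1 + ε)) = ((1 - δ) * M * μ) * (1 + ε) := by ring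
    have a5 : ((1 - δ) * M * μ) * (1 + ε) ≤ (μ * μ) * (1 + ε) :=
      mul_le_mul_of_nonneg_right a1 (by linarith)
    have a6 : (μ * μ) * (1 + ε) ≤ (u i * u j) * (1 + ε) :=
      mul_le_mul_of_nonneg_right a2 (by linarith)
    linarith [a3, a4, a5, a6]
  have scalar2 : (1 - δ) * (1 - ε) * (u i * u j) ≤ 1 := by
    have b1 : u i * u j ≤ M * M := mul_le_mul hui_hi huj_hi (hu_pos j).le hM_pos.le
    have b2 : (1 - δ) * (1 - ε) * (u i * u j) ≤ (1 - δ) * (1 - ε) * (M * M) :=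
      mul_le_mul_of_nonneg_left b1 (mul_nonneg hδ1 (by linarith))
    have b3 : (1 - δ) * M * M ≤ μ * M := mul_le_mul_of_nonneg_right hkey hM_pos.le
    have b4 : ((1 - δ) * M * M) * (1 - ε) ≤ (μ * M) * (1 - ε) :=
      mul_le_mul_of_nonneg_right b3 (by linarith)
    have e1 : (1 - δ) * (1 - ε) * (M * M) = ((1 - δ) * M * M) * (1 - ε) := by ring
    have e2 : (μ * M) * (1 - ε) = μ * M * (1 - ε) := by ring
    linarith [b2, b4, e1, e2, hF2]
  constructor
  · rw [hrel i j]
    exact mul_le_mul_of_nonneg_right scalar1 hB_pos.le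
  · rw [hrel i j]
    calc (1 - δ) * (1 - ε) * (u i * u j * (vh i * A i j * vh j))
        = ((1 - δ) * (1 - ε) * (u i * u j)) * (vh i * A i j * vh j) := by ring
      _ ≤ 1 * (vh i * A i j * vh j) := mul_le_mul_of_nonneg_right scalar2 hB_pos.le
      _ = vh i * A i j * vh j := one_mul _
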